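/- The complete lattice [0,1] does not satisfy the transfinite distributivity law at γ = ω₁: there exists a family of elements a_f ∈ [0,1], indexed by functions f : β → ω₁ for ordinals β < ω₁, such that a_f ≤ sup{a_g : g : β+1 → ω₁, g restricts to f} for every β < ω₁ and f : β → ω₁, and a_f = inf{a_{f|α} : α < β} for every limit ordinal β < ω₁ and f : β → ω₁, and yet a_∅ is NOT ≤ the supremum over functions f : ω₁ → ω₁ of inf over β < ω₁ of a_{f|β}. -/

import Mathlib

instance : Fact ((0:ℝ) ≤ 1) := ⟨zero_le_one⟩

/-- Restriction of `f : Iio β → Iio o` to `Iio α` for `α ≤ β`. -/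
def resFn {o β α : Ordinal} (h : α ≤ β) (f : Set.Iio β → Set.Iio o) :
    Set.Iio α → Set.Iio o :=
  fun x => f ⟨x.1, lt_of_lt_of_le x.2 h⟩

/-- The unique function `Iio 0 → Iio o`. -/
def emptyFn (o : Ordinal) : Set.Iio (0 : Ordinal) → Set.Iio o :=
  fun t => absurd t.2 (not_lt_of_ge (zero_le (a := t.1)))

/-- The first uncountable ordinal `ω₁`, the initial ordinal of `ℵ₁`. -/
noncomputable def omega1 : Ordinal := (Cardinal.aleph 1).ord

lemma omega1_pos : (0 : Ordinal) < omega1 := by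
  rw [omega1, ← Cardinal.ord_zero]
  exact Cardinal.ord_lt_ord.mpr (Cardinal.aleph_pos 1)

/- ### Auxiliary development -/

universe u v

attribute [local instance] Classical.propDecidable

noncomputable section

/-- A natural number code for ordinals: the inverse of `Nat.cast` on finite ordinals. -/
def natCode (ξ : Ordinal) : ℕ :=
  if h : ξ < Ordinal.omega0 then Classical.choose (Ordinal.lt_omega0.mp h) else 0

lemma natCode_nat (n : ℕ) : natCode (n : Ordinal) = n := by
  have h : (n : Ordinal) < Ordinal.omega0 := Ordinal.nat_lt_omega0 n
  rw [natCode, dif_pos h]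
  have hs := Classical.choose_spec (Ordinal.lt_omega0.mp h)
  exact (Nat.cast_injective hs).symm

/-- The basic real weights. -/
def dd (n : ℕ) : ℝ := 1 - 1/(n+2)

lemma dd_nonneg (n : ℕ) : 0 ≤ dd n := by
  have h1 : (1:ℝ)/(n+2) ≤ 1 := by
    rw [div_le_one (by positivity)]
    have : (0:ℝ) ≤ n := Nat.cast_nonneg n
    linarith
  simp only [dd]; linarith

lemma dd_lt_one (n : ℕ) : dd n < 1 := by
  have h1 : (0:ℝ) < 1/(n+2) := by positivity
  simp only [dd]; linarith

lemma dd_le_one (n : ℕ) : dd n ≤ 1 := le_of_lt (dd_lt_one n)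

/-- The weight of an ordinal. -/
def cc (ξ : Ordinal) : ℝ := dd (natCode ξ)

lemma cc_nonneg (ξ : Ordinal) : 0 ≤ cc ξ := dd_nonneg _
lemma cc_le_one (ξ : Ordinal) : cc ξ ≤ 1 := dd_le_one _

/-- Finite partial product of weights along `f`. -/
def pp {β : Ordinal.{u}} (f : Set.Iio β → Set.Iio omega1.{v}) (S : Finset Ordinal) : ℝ :=
  ∏ δ ∈ S, if h : δ < β then cc (f ⟨δ, h⟩).1 else 1

lemma pp_nonneg {β : Ordinal.{u}} (f : Set.Iio β → Set.Iio omega1.{v}) (S : Finset Ordinal) :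
    0 ≤ pp f S := by
  refine Finset.prod_nonneg fun δ _ => ?_
  by_cases h : δ < β
  · rw [dif_pos h]; exact cc_nonneg _
  · rw [dif_neg h]; norm_num

lemma pp_le_one {β : Ordinal.{u}} (f : Set.Iio β → Set.Iio omega1.{v}) (S : Finset Ordinal) :
    pp f S ≤ 1 := by
  refine Finset.prod_le_one (fun δ _ => ?_) (fun δ _ => ?_)
  · by_cases h : δ < β
    · rw [dif_pos h]; exact cc_nonneg _
    · rw [dif_neg h]; norm_num
  · by_cases h : δ < β
    · rw [dif_pos h]; exact cc_le_one _
    · rw [dif_neg h]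

lemma pp_empty {β : Ordinal.{u}} (f : Set.Iio β → Set.Iio omega1.{v}) : pp f ∅ = 1 :=
  Finset.prod_empty

lemma bddBelow_pp {β : Ordinal.{u}} (f : Set.Iio β → Set.Iio omega1.{v}) :
    BddBelow (Set.range (pp f)) := by
  refine ⟨0, fun x hx => ?_⟩
  obtain ⟨S, rfl⟩ := hx
  exact pp_nonneg f S

/-- The value assigned to a node `f`. -/
def rr {β : Ordinal.{u}} (f : Set.Iio β → Set.Iio omega1.{v}) : ℝ :=
  ⨅ S : Finset Ordinal, pp f S

lemma rr_le_pp {β : Ordinal.{u}} (f : Set.Iio β → Set.Iio omega1.{v}) (S : Finset Ordinal) :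
    rr f ≤ pp f S := ciInf_le (bddBelow_pp f) S

lemma rr_nonneg {β : Ordinal.{u}} (f : Set.Iio β → Set.Iio omega1.{v}) : 0 ≤ rr f :=
  le_ciInf fun S => pp_nonneg f S

lemma rr_le_one {β : Ordinal.{u}} (f : Set.Iio β → Set.Iio omega1.{v}) : rr f ≤ 1 :=
  (rr_le_pp f ∅).trans_eq (pp_empty f)

lemma pp_res {α β : Ordinal.{u}} (h : α ≤ β) (f : Set.Iio β → Set.Iio omega1.{v})
    (S : Finset Ordinal) :
    pp (resFn h f) S = pp f (S.filter (· < α)) := by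
  rw [pp, pp, Finset.prod_filter]
  refine Finset.prod_congr rfl fun δ _ => ?_
  by_cases hδ : δ < α
  · rw [dif_pos hδ, if_pos hδ, dif_pos (lt_of_lt_of_le hδ h)]
    rfl
  · rw [dif_neg hδ, if_neg hδ]

lemma rr_res {α β : Ordinal.{u}} (h : α ≤ β) (f : Set.Iio β → Set.Iio omega1.{v}) :
    rr f ≤ rr (resFn h f) :=
  le_ciInf fun S => (rr_le_pp f (S.filter (· < α))).trans_eq (pp_res h f S).symm

/-- Extend `f : Iio β → Iio ω₁` to `Iio (β+1)` by the value `ξ` at `β`. -/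
def extFn {β : Ordinal.{u}} (f : Set.Iio β → Set.Iio omega1.{v}) (ξ : Set.Iio omega1.{v}) :
    Set.Iio (β + 1) → Set.Iio omega1.{v} :=
  fun x => if h : x.1 < β then f ⟨x.1, h⟩ else ξ

lemma resFn_extFn {β : Ordinal.{u}} (f : Set.Iio β → Set.Iio omega1.{v}) (ξ : Set.Iio omega1.{v}) :
    resFn ((le_self_add : β ≤ β + 1)) (extFn f ξ) = f := by
  funext x
  have hx : (x : Ordinal) < β := x.2
  simp only [resFn, extFn]
  rw [dif_pos hx]

lemma lt_add_one_self (β : Ordinal) : β < β + 1 := by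
  rw [Ordinal.add_one_eq_succ]; exact Order.lt_succ β

lemma lt_of_lt_add_one {δ β : Ordinal} (h : δ < β + 1) : δ ≤ β := by
  rw [Ordinal.add_one_eq_succ] at h; exact Order.lt_succ_iff.mp h

lemma pp_extFn_not_mem {β : Ordinal.{u}} (f : Set.Iio β → Set.Iio omega1.{v}) (ξ : Set.Iio omega1.{v})
    {S : Finset Ordinal} (hβ : β ∉ S) : pp (extFn f ξ) S = pp f S := by
  refine Finset.prod_congr rfl fun δ hδ => ?_
  by_cases h1 : δ < β
  · rw [dif_pos (h1.trans (lt_add_one_self β)), dif_pos h1]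
    have : extFn f ξ ⟨δ, h1.trans (lt_add_one_self β)⟩ = f ⟨δ, h1⟩ := dif_pos h1
    rw [this]
  · have h2 : ¬ δ < β + 1 := by
      intro h
      rcases (lt_of_lt_add_one h).lt_or_eq with h3 | h3
      · exact h1 h3
      · exact hβ (h3 ▸ hδ)
    rw [dif_neg h2, dif_neg h1]

lemma pp_extFn_ge {β : Ordinal.{u}} (f : Set.Iio β → Set.Iio omega1.{v}) (ξ : Set.Iio omega1.{v})
    (S : Finset Ordinal) : cc ξ.1 * rr f ≤ pp (extFn f ξ) S := by
  by_cases hβ : β ∈ S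
  · have h1 : pp (extFn f ξ) S = cc ξ.1 * pp (extFn f ξ) (S.erase β) := by
      rw [pp, ← Finset.mul_prod_erase S _ hβ]
      congr 1
      rw [dif_pos (lt_add_one_self β)]
      have : extFn f ξ ⟨β, lt_add_one_self β⟩ = ξ := dif_neg (lt_irrefl β)
      rw [this]
    rw [h1, pp_extFn_not_mem f ξ (Finset.notMem_erase β S)]
    exact mul_le_mul_of_nonneg_left (rr_le_pp f _) (cc_nonneg _)
  · rw [pp_extFn_not_mem f ξ hβ]
    calc cc ξ.1 * rr f ≤ 1 * rr f :=
          mul_le_mul_of_nonneg_right (cc_le_one _) (rr_nonneg f)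
      _ = rr f := one_mul _
      _ ≤ pp f S := rr_le_pp f S

lemma rr_extFn_ge {β : Ordinal.{u}} (f : Set.Iio β → Set.Iio omega1.{v}) (ξ : Set.Iio omega1.{v}) :
    cc ξ.1 * rr f ≤ rr (extFn f ξ) :=
  le_ciInf fun S => pp_extFn_ge f ξ S

lemma rr_emptyFn : rr (emptyFn omega1) = 1 := by
  refine le_antisymm (rr_le_one _) (le_ciInf fun S => ?_)
  have : pp (emptyFn omega1) S = 1 :=
    Finset.prod_eq_one fun δ _ => dif_neg (not_lt_of_ge (zero_le (a := δ)))
  rw [this]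

lemma omega0_le_omega1 : Ordinal.omega0 ≤ omega1 := by
  rw [omega1, ← Cardinal.ord_aleph0]
  exact Cardinal.ord_le_ord.mpr (Cardinal.aleph0_le_aleph 1)

lemma nat_lt_omega1 (n : ℕ) : (n : Ordinal) < omega1 :=
  lt_of_lt_of_le (Ordinal.nat_lt_omega0 n) omega0_le_omega1

lemma isLimit_omega1 : Order.IsSuccLimit omega1 :=
  Cardinal.isSuccLimit_ord (Cardinal.aleph0_le_aleph 1)

lemma exists_infinite_fiber_natCode (f : Set.Iio omega1.{u} → Set.Iio omega1.{v}) :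
    ∃ n : ℕ, {δ : Set.Iio omega1 | natCode (f δ).1 = n}.Infinite := by
  have hcard : Cardinal.mk (ULift.{u+1} ℕ) < Cardinal.mk (Set.Iio omega1.{u}) := by
    rw [Cardinal.mk_eq_aleph0 (ULift.{u+1} ℕ), Ordinal.mk_Iio_ordinal, omega1,
      Cardinal.card_ord]
    rw [← Cardinal.lift_aleph0.{u+1,u}]
    rw [Cardinal.lift_lt]
    rw [← Cardinal.aleph_zero]
    exact Cardinal.aleph_lt_aleph.mpr zero_lt_one
  obtain ⟨⟨n⟩, hfib⟩ := Cardinal.exists_infinite_fiber'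
    (fun δ : Set.Iio omega1 => (ULift.up (natCode (f δ).1) : ULift.{u+1} ℕ)) hcard
  refine ⟨n, ?_⟩
  have h2 := Set.infinite_coe_iff.mp hfib
  have heq : ((fun δ : Set.Iio omega1 => (ULift.up (natCode (f δ).1) : ULift.{u+1} ℕ)) ⁻¹'
      {ULift.up n}) = {δ : Set.Iio omega1 | natCode (f δ).1 = n} := by
    ext δ
    simp [ULift.ext_iff]
  rwa [heq] at h2

end

/-- The complete lattice `[0,1]` does not satisfy the transfinite distributivity law at
`γ = ω₁`: there is a tree-indexed family of elements of `[0,1]` satisfying the two premises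
of the law but not its conclusion. -/
theorem unitInterval_transfinite_distrib_fails_at_omega1 :
    ∃ a : (β : Set.Iio omega1) → (Set.Iio β.1 → Set.Iio omega1) → ↥(Set.Icc (0:ℝ) 1),
      (∀ (β : Ordinal) (hβ : β + 1 < omega1) (f : Set.Iio β → Set.Iio omega1),
          a ⟨β, Set.mem_Iio.mpr (lt_of_le_of_lt ((le_self_add : β ≤ β + 1)) hβ)⟩ f ≤
            ⨆ g : {g : Set.Iio (β + 1) → Set.Iio omega1 //
                    resFn ((le_self_add : β ≤ β + 1)) g = f},
              a ⟨β + 1, Set.mem_Iio.mpr hβ⟩ g.1) ∧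
      (∀ (β : Set.Iio omega1), Order.IsSuccLimit β.1 → ∀ f : Set.Iio β.1 → Set.Iio omega1,
          a β f = ⨅ α : Set.Iio β.1,
            a ⟨α.1, Set.mem_Iio.mpr (lt_trans α.2 β.2)⟩ (resFn (le_of_lt α.2) f)) ∧
      ¬ (a ⟨0, Set.mem_Iio.mpr omega1_pos⟩ (emptyFn omega1) ≤
          ⨆ f : Set.Iio omega1 → Set.Iio omega1,
            ⨅ β : Set.Iio omega1, a β (resFn (le_of_lt β.2) f)) := by
  refine ⟨fun β f => ⟨rr f, rr_nonneg f, rr_le_one f⟩, ?_, ?_, ?_⟩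
  · -- successor condition
    intro β hβ f
    set X := ⨆ g : {g : Set.Iio (β + 1) → Set.Iio omega1 //
        resFn ((le_self_add : β ≤ β + 1)) g = f},
      ((⟨rr g.1, rr_nonneg g.1, rr_le_one g.1⟩ : Set.Icc (0:ℝ) 1)) with hX
    rw [← Subtype.coe_le_coe]
    refine le_of_forall_sub_le fun ε hε => ?_
    obtain ⟨n, hn⟩ := exists_nat_one_div_lt hε
    have hn' : (1:ℝ)/(n+2) < ε := by
      refine lt_of_le_of_lt ?_ hn
      apply div_le_div_of_nonneg_left one_pos.le (by positivity)
      linarith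
    set ξn : Set.Iio omega1 := ⟨((n : ℕ) : Ordinal), nat_lt_omega1 n⟩ with hξn
    have hcc : cc ξn.1 = dd n := by rw [cc, hξn, natCode_nat]
    have hkey : ((⟨rr (extFn f ξn), rr_nonneg _, rr_le_one _⟩ : Set.Icc (0:ℝ) 1)) ≤ X := by
      exact le_iSup (fun g : {g : Set.Iio (β + 1) → Set.Iio omega1 //
        resFn ((le_self_add : β ≤ β + 1)) g = f} =>
          ((⟨rr g.1, rr_nonneg g.1, rr_le_one g.1⟩ : Set.Icc (0:ℝ) 1)))
        ⟨extFn f ξn, resFn_extFn f ξn⟩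
    have hkey' : rr (extFn f ξn) ≤ (X : ℝ) := hkey
    have h1 : cc ξn.1 * rr f ≤ rr (extFn f ξn) := rr_extFn_ge f ξn
    have h2 : rr f ≤ 1 := rr_le_one f
    have h3 : 0 ≤ rr f := rr_nonneg f
    have h4 : (0:ℝ) < 1/(n+2) := by positivity
    rw [hcc, dd] at h1
    nlinarith [h1, hkey']
  · -- limit condition
    intro β hlim f
    set Y := ⨅ α : Set.Iio β.1,
      ((⟨rr (resFn (le_of_lt α.2) f), rr_nonneg _, rr_le_one _⟩ : Set.Icc (0:ℝ) 1)) with hY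
    refine le_antisymm (le_iInf fun α => ?_) ?_
    · exact Subtype.mk_le_mk.mpr (rr_res (le_of_lt α.2) f)
    · rw [← Subtype.coe_le_coe]
      refine le_of_forall_sub_le fun ε hε => ?_
      have hlt : rr f < rr f + ε := lt_add_of_pos_right _ hε
      obtain ⟨S, hS⟩ : ∃ S : Finset Ordinal, pp f S < rr f + ε :=
        exists_lt_of_ciInf_lt hlt
      set α0 : Ordinal := (S.filter (· < β.1)).sup id + 1 with hα0def
      have hsup : (S.filter (· < β.1)).sup id < β.1 := by
        refine Finset.sup_lt_iff (by rw [Ordinal.bot_eq_zero]; exact hlim.pos) |>.mpr ?_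
        intro δ hδ
        exact (Finset.mem_filter.mp hδ).2
      have hα0 : α0 < β.1 := by
        rw [hα0def, Ordinal.add_one_eq_succ]
        exact hlim.succ_lt hsup
      have heq : pp (resFn (le_of_lt hα0) f) S = pp f S := by
        refine Finset.prod_congr rfl fun δ hδ => ?_
        by_cases h1 : δ < α0
        · rw [dif_pos h1, dif_pos (h1.trans hα0)]
          rfl
        · have h2 : ¬ δ < β.1 := by
            intro h2
            apply h1
            have hmem : δ ∈ S.filter (· < β.1) := Finset.mem_filter.mpr ⟨hδ, h2⟩
            have : δ ≤ (S.filter (· < β.1)).sup id := Finset.le_sup (f := id) hmem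
            exact lt_of_le_of_lt this (lt_add_one_self _)
          rw [dif_neg h1, dif_neg h2]
      have hmemY : Y ≤ ((⟨rr (resFn (le_of_lt hα0) f), rr_nonneg _, rr_le_one _⟩ :
          Set.Icc (0:ℝ) 1)) := by
        exact iInf_le (fun α : Set.Iio β.1 =>
          ((⟨rr (resFn (le_of_lt α.2) f), rr_nonneg _, rr_le_one _⟩ : Set.Icc (0:ℝ) 1)))
          ⟨α0, hα0⟩
      have hmemY' : (Y : ℝ) ≤ rr (resFn (le_of_lt hα0) f) := hmemY
      have : rr (resFn (le_of_lt hα0) f) ≤ pp f S :=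
        (rr_le_pp _ S).trans_eq heq
      linarith
  · -- failure of the conclusion
    intro hle
    have hone : ((⟨rr (emptyFn omega1), rr_nonneg _, rr_le_one _⟩ : Set.Icc (0:ℝ) 1) : ℝ)
        = 1 := rr_emptyFn
    -- each branch has infimum 0
    have hbranch : ∀ f : Set.Iio omega1 → Set.Iio omega1,
        (⨅ β : Set.Iio omega1,
          ((⟨rr (resFn (le_of_lt β.2) f), rr_nonneg _, rr_le_one _⟩ : Set.Icc (0:ℝ) 1))) ≤
        ⟨(0:ℝ), by norm_num⟩ := by
      intro f
      set Y := ⨅ β : Set.Iio omega1,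
        ((⟨rr (resFn (le_of_lt β.2) f), rr_nonneg _, rr_le_one _⟩ : Set.Icc (0:ℝ) 1)) with hY
      rw [← Subtype.coe_le_coe]
      show (Y : ℝ) ≤ 0
      refine le_of_forall_sub_le fun ε hε => ?_
      -- pigeonhole: some natCode value occurs infinitely often
      obtain ⟨n, hfib'⟩ := exists_infinite_fiber_natCode f
      obtain ⟨m, hm⟩ := exists_pow_lt_of_lt_one hε (dd_lt_one n)
      obtain ⟨T, hT_sub, hT_card⟩ := hfib'.exists_subset_card_eq m
      set S : Finset Ordinal := T.image (fun δ => δ.1) with hSdef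
      have hβ0 : S.sup id + 1 < omega1 := by
        have hsup : S.sup id < omega1 := by
          refine Finset.sup_lt_iff (by rw [Ordinal.bot_eq_zero]; exact omega1_pos) |>.mpr ?_
          intro δ hδ
          obtain ⟨δ', _, rfl⟩ := Finset.mem_image.mp hδ
          exact δ'.2
        rw [Ordinal.add_one_eq_succ]
        exact isLimit_omega1.succ_lt hsup
      set β0 : Set.Iio omega1 := ⟨S.sup id + 1, hβ0⟩ with hβ0def
      have hmemY : (Y : ℝ) ≤ rr (resFn (le_of_lt β0.2) f) := by
        exact_mod_cast iInf_le (fun β : Set.Iio omega1 =>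
          ((⟨rr (resFn (le_of_lt β.2) f), rr_nonneg _, rr_le_one _⟩ : Set.Icc (0:ℝ) 1))) β0
      have hval : pp (resFn (le_of_lt β0.2) f) S = dd n ^ m := by
        rw [pp, Finset.prod_image]
        · rw [← hT_card, ← Finset.prod_const]
          refine Finset.prod_congr rfl fun δ' hδ' => ?_
          have hlt : δ'.1 < β0.1 := by
            refine lt_of_le_of_lt (Finset.le_sup (f := id) ?_) (lt_add_one_self _)
            exact Finset.mem_image.mpr ⟨δ', hδ', rfl⟩
          rw [dif_pos hlt]
          have hcode : natCode (f δ').1 = n := hT_sub hδ'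
          show cc ((f ⟨δ'.1, _⟩).1) = dd n
          have : (⟨δ'.1, lt_of_lt_of_le hlt (le_of_lt β0.2)⟩ : Set.Iio omega1) = δ' :=
            Subtype.ext rfl
          rw [this, cc, hcode]
        · intro x _ y _ hxy
          exact Subtype.ext hxy
      have h1 : rr (resFn (le_of_lt β0.2) f) ≤ dd n ^ m := (rr_le_pp _ S).trans_eq hval
      linarith
    -- combine
    set X := ⨆ f : Set.Iio omega1 → Set.Iio omega1,
      ⨅ β : Set.Iio omega1,
        ((⟨rr (resFn (le_of_lt β.2) f), rr_nonneg _, rr_le_one _⟩ : Set.Icc (0:ℝ) 1)) with hX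
    have hX0 : X ≤ ⟨(0:ℝ), by norm_num⟩ := by
      refine iSup_le fun f => ?_
      exact hbranch f
    have h1 : (1:ℝ) ≤ (X : ℝ) := by
      have := Subtype.coe_le_coe.mpr hle
      rw [hone] at this
      exact this
    have h0 : (X : ℝ) ≤ 0 := Subtype.coe_le_coe.mpr hX0
    linarith
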